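/- With the sets I(i_0,…,i_k) and J(i_0,…,i_k) defined recursively from a covering of K by regular isolated families: if (i_0,…,i_k) is a finite sequence of naturals and 0 ≤ l < k, then I(i_0,…,i_k) ⊆ J(i_0,…,i_l) ⊆ J(i_l); moreover, if the naturals i_0, i_1, …, i_k are not all distinct, then I(i_0,…,i_k) = ∅. -/

import Mathlib

open Set TopologicalSpace

/-- A family of subsets is isolated if each member is disjoint from the closure of the
union of the other members. -/
def IsIsolatedFamily {K : Type*} [TopologicalSpace K] (ℐ : Set (Set K)) : Prop :=
  ∀ N ∈ ℐ, N ∩ closure (⋃₀ (ℐ \ {N})) = ∅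

/-- A regular isolated family: `N = closure N \ closure (⋃ (ℐ \ {N}))` for each member. -/
def IsRegularIsolatedFamily {K : Type*} [TopologicalSpace K] (ℐ : Set (Set K)) : Prop :=
  IsIsolatedFamily ℐ ∧ ∀ N ∈ ℐ, N = closure N \ closure (⋃₀ (ℐ \ {N}))

/-- `Jof F = closure (⋃ F) \ ⋃ F` for a family of sets `F`. -/
def Jof {K : Type*} [TopologicalSpace K] (F : Set (Set K)) : Set K :=
  closure (⋃₀ F) \ ⋃₀ F

/-- Auxiliary recursion defining the families `𝓘(i_0,…,i_k)`, with the sequence of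
indices given in *reverse* order (most recent index first):
`𝓘(i_0,…,i_k,i_{k+1}) = {N ∩ J(i_0,…,i_k) : N ∈ 𝓘(i_{k+1})}`. -/
def famRev {K : Type*} [TopologicalSpace K] (𝓘 : ℕ → Set (Set K)) : List ℕ → Set (Set K)
  | [] => ∅
  | [i] => 𝓘 i
  | i :: j :: l => (fun N => N ∩ Jof (famRev 𝓘 (j :: l))) '' 𝓘 i

/-- The family `𝓘(i_0,…,i_k)`, the index sequence given in natural order. -/
def fam {K : Type*} [TopologicalSpace K] (𝓘 : ℕ → Set (Set K)) (l : List ℕ) :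
    Set (Set K) :=
  famRev 𝓘 l.reverse

/-- The set `I(i_0,…,i_k) = ⋃ 𝓘(i_0,…,i_k)`. -/
def ISet {K : Type*} [TopologicalSpace K] (𝓘 : ℕ → Set (Set K)) (l : List ℕ) : Set K :=
  ⋃₀ fam 𝓘 l

/-- The set `J(i_0,…,i_k) = closure I(i_0,…,i_k) \ I(i_0,…,i_k)`. -/
def JSet {K : Type*} [TopologicalSpace K] (𝓘 : ℕ → Set (Set K)) (l : List ℕ) : Set K :=
  closure (ISet 𝓘 l) \ ISet 𝓘 l

/-- Membership in `Σ`: nonempty strictly increasing finite sequences of naturals. -/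
def SigmaMem (l : List ℕ) : Prop :=
  l ≠ [] ∧ l.Chain' (· < ·)

/-- The total order `≺` on finite sequences: `a ≺ b` iff either they first differ at a
position `r` where `a` is smaller, or `b` is a proper initial segment of `a`. -/
def SLt (a b : List ℕ) : Prop :=
  (∃ (r : ℕ) (x y : ℕ), (∀ s < r, a[s]? = b[s]?) ∧ a[r]? = some x ∧ b[r]? = some y ∧ x < y)
  ∨ (b <+: a ∧ b ≠ a)

section Aux

variable {K : Type*} [TopologicalSpace K]

/-- `ISet` with the index sequence given in reverse order. -/
def ISetR (𝓘 : ℕ → Set (Set K)) (r : List ℕ) : Set K := ⋃₀ famRev 𝓘 r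

/-- `JSet` with the index sequence given in reverse order. -/
def JSetR (𝓘 : ℕ → Set (Set K)) (r : List ℕ) : Set K :=
  closure (ISetR 𝓘 r) \ ISetR 𝓘 r

variable {𝓘 : ℕ → Set (Set K)}

lemma ISetR_nil : ISetR 𝓘 [] = ∅ := by simp [ISetR, famRev]

lemma JSetR_nil : JSetR 𝓘 [] = ∅ := by simp [JSetR, ISetR_nil]

lemma ISetR_single (i : ℕ) : ISetR 𝓘 [i] = ⋃₀ 𝓘 i := rfl

lemma ISetR_cons (i : ℕ) {r : List ℕ} (hr : r ≠ []) :
    ISetR 𝓘 (i :: r) = ⋃₀ 𝓘 i ∩ JSetR 𝓘 r := by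
  obtain ⟨j, t, rfl⟩ := List.exists_cons_of_ne_nil hr
  ext x
  simp only [ISetR, famRev, sUnion_image, mem_iUnion, mem_inter_iff, mem_sUnion, JSetR, Jof]
  constructor
  · rintro ⟨N, hN, hx, hJ⟩; exact ⟨⟨N, hN, hx⟩, hJ⟩
  · rintro ⟨⟨N, hN, hx⟩, hJ⟩; exact ⟨N, hN, hx, hJ⟩

lemma ISetR_cons_subset (i : ℕ) (r : List ℕ) : ISetR 𝓘 (i :: r) ⊆ ⋃₀ 𝓘 i := by
  rcases eq_or_ne r [] with rfl | hr
  · exact (ISetR_single i).subset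
  · rw [ISetR_cons i hr]; exact inter_subset_left

variable (hreg : ∀ i : ℕ, IsRegularIsolatedFamily (𝓘 i))
include hreg

/-- Key local lemma: within the complement of the closure of the other members,
the closure of `⋃₀ 𝓘 i ∩ S` is contained in `N ∩ S`, for `S` closed. -/
lemma key_local (i : ℕ) {S : Set K} (hS : IsClosed S) {N : Set K} (hN : N ∈ 𝓘 i) :
    closure (⋃₀ 𝓘 i ∩ S) ∩ (closure (⋃₀ (𝓘 i \ {N})))ᶜ ⊆ N ∩ S := by
  have hsplit : ⋃₀ 𝓘 i ∩ S = (N ∩ S) ∪ (⋃₀ (𝓘 i \ {N}) ∩ S) := by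
    have : ⋃₀ 𝓘 i = N ∪ ⋃₀ (𝓘 i \ {N}) := by
      ext x
      simp only [mem_sUnion, mem_union, mem_diff, mem_singleton_iff]
      constructor
      · rintro ⟨M, hM, hx⟩
        rcases eq_or_ne M N with rfl | hMN
        · exact Or.inl hx
        · exact Or.inr ⟨M, ⟨hM, hMN⟩, hx⟩
      · rintro (hx | ⟨M, ⟨hM, _⟩, hx⟩)
        · exact ⟨N, hN, hx⟩
        · exact ⟨M, hM, hx⟩
    rw [this, union_inter_distrib_right]
  rintro x ⟨hx, hxU⟩
  rw [hsplit, closure_union] at hx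
  rcases hx with hx | hx
  · have hxS : x ∈ S := by
      have := closure_mono (inter_subset_right (s := N)) hx
      rwa [hS.closure_eq] at this
    have hxN : x ∈ closure N := closure_mono inter_subset_left hx
    refine ⟨?_, hxS⟩
    rw [(hreg i).2 N hN]
    exact ⟨hxN, hxU⟩
  · exact absurd (closure_mono inter_subset_left hx) hxU

lemma notin_closure_others (i : ℕ) {N : Set K} (hN : N ∈ 𝓘 i) {x : K} (hx : x ∈ N) :
    x ∈ (closure (⋃₀ (𝓘 i \ {N})))ᶜ := by
  intro hmem
  have h := (hreg i).1 N hN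
  have : x ∈ N ∩ closure (⋃₀ (𝓘 i \ {N})) := ⟨hx, hmem⟩
  rw [h] at this
  exact this

lemma closure_inter_self (i : ℕ) {S : Set K} (hS : IsClosed S) :
    closure (⋃₀ 𝓘 i ∩ S) ∩ ⋃₀ 𝓘 i ⊆ ⋃₀ 𝓘 i ∩ S := by
  rintro x ⟨hx, N, hN, hxN⟩
  have h := key_local hreg i hS hN ⟨hx, notin_closure_others hreg i hN hxN⟩
  exact ⟨⟨N, hN, h.1⟩, h.2⟩

lemma closed_diff (i : ℕ) {S : Set K} (hS : IsClosed S) :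
    IsClosed (closure (⋃₀ 𝓘 i ∩ S) \ (⋃₀ 𝓘 i ∩ S)) := by
  rw [← isOpen_compl_iff, isOpen_iff_forall_mem_open]
  intro x hx
  simp only [mem_compl_iff, mem_diff, not_and, not_not] at hx
  by_cases hcl : x ∈ closure (⋃₀ 𝓘 i ∩ S)
  · obtain ⟨⟨N, hN, hxN⟩, hxS⟩ := hx hcl
    refine ⟨(closure (⋃₀ (𝓘 i \ {N})))ᶜ, ?_, isClosed_closure.isOpen_compl,
      notin_closure_others hreg i hN hxN⟩
    intro y hy
    simp only [mem_compl_iff, mem_diff, not_and, not_not]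
    intro hycl
    exact key_local hreg i hS hN ⟨hycl, hy⟩ |>.imp (fun h => ⟨N, hN, h⟩) id
  · refine ⟨(closure (⋃₀ 𝓘 i ∩ S))ᶜ, ?_, isClosed_closure.isOpen_compl, hcl⟩
    intro y hy
    simp only [mem_compl_iff, mem_diff, not_and, not_not] at hy ⊢
    intro h; exact absurd h hy

/-- Main structural lemma: `JSetR r` is closed, and for `r = i :: r'` the closure of
`ISetR r` can only meet `⋃₀ 𝓘 i` inside `ISetR r`. -/
lemma JSetR_closed_and_core :
    ∀ r : List ℕ, IsClosed (JSetR 𝓘 r) ∧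
      ∀ i r', r = i :: r' → closure (ISetR 𝓘 r) ∩ ⋃₀ 𝓘 i ⊆ ISetR 𝓘 r := by
  intro r
  induction r with
  | nil =>
      refine ⟨?_, fun i r' h => by simp at h⟩
      rw [JSetR_nil]; exact isClosed_empty
  | cons i r' ih =>
      rcases eq_or_ne r' [] with rfl | hr'
      · constructor
        · have : JSetR 𝓘 [i] = closure (⋃₀ 𝓘 i ∩ univ) \ (⋃₀ 𝓘 i ∩ univ) := by
            rw [inter_univ]; rfl
          rw [this]
          exact closed_diff hreg i isClosed_univ
        · rintro j t h
          injection h with h1 h2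
          subst h1; subst h2
          rw [ISetR_single]
          exact inter_subset_right
      · have hJ : IsClosed (JSetR 𝓘 r') := ih.1
        constructor
        · have : JSetR 𝓘 (i :: r') =
              closure (⋃₀ 𝓘 i ∩ JSetR 𝓘 r') \ (⋃₀ 𝓘 i ∩ JSetR 𝓘 r') := by
            rw [JSetR, ISetR_cons i hr']
          rw [this]
          exact closed_diff hreg i hJ
        · rintro j t h
          injection h with h1 h2
          subst h1; subst h2
          rw [ISetR_cons i hr']
          exact closure_inter_self hreg i hJ

lemma JSetR_closed (r : List ℕ) : IsClosed (JSetR 𝓘 r) :=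
  (JSetR_closed_and_core hreg r).1

omit hreg in
lemma ISetR_cons_subset_JSetR (i : ℕ) {r : List ℕ} (hr : r ≠ []) :
    ISetR 𝓘 (i :: r) ⊆ JSetR 𝓘 r := by
  rw [ISetR_cons i hr]; exact inter_subset_right

lemma JSetR_mono : ∀ r s : List ℕ, s <:+ r → s ≠ [] → JSetR 𝓘 r ⊆ JSetR 𝓘 s := by
  intro r
  induction r with
  | nil => intro s hs hne; exact absurd (List.suffix_nil.mp hs) hne
  | cons i r' ih =>
      intro s hs hne
      rcases List.suffix_cons_iff.mp hs with rfl | hs'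
      · exact subset_rfl
      · have hr' : r' ≠ [] := by
          rintro rfl; exact hne (List.suffix_nil.mp hs')
        have h1 : JSetR 𝓘 (i :: r') ⊆ JSetR 𝓘 r' := by
          refine fun x hx => ?_
          have hcl : closure (ISetR 𝓘 (i :: r')) ⊆ JSetR 𝓘 r' := by
            rw [← (JSetR_closed hreg r').closure_eq]
            exact closure_mono (ISetR_cons_subset_JSetR i hr')
          exact hcl hx.1
        exact (h1.trans (ih s hs' hne))

lemma JSetR_head (i : ℕ) (r' : List ℕ) : JSetR 𝓘 (i :: r') ⊆ JSetR 𝓘 [i] := by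
  rintro x ⟨hx, hnx⟩
  have hcl : x ∈ closure (⋃₀ 𝓘 i) := closure_mono (ISetR_cons_subset i r') hx
  refine ⟨hcl, fun hmem => ?_⟩
  exact hnx ((JSetR_closed_and_core hreg (i :: r')).2 i r' rfl ⟨hx, hmem⟩)

lemma ISetR_dup_empty : ∀ r : List ℕ, ¬ r.Nodup → ISetR 𝓘 r = ∅ := by
  have hmem_suffix : ∀ (i : ℕ) (s : List ℕ), i ∈ s → ∃ t, (i :: t) <:+ s := by
    intro i s
    induction s with
    | nil => simp
    | cons a t ih =>
        intro h
        rcases List.mem_cons.mp h with rfl | h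
        · exact ⟨t, List.suffix_refl _⟩
        · obtain ⟨t', ht'⟩ := ih h
          exact ⟨t', ht'.trans (List.suffix_cons a t)⟩
  have hsuffix_dup : ∀ r : List ℕ, ¬ r.Nodup → ∃ i s, i ∈ s ∧ (i :: s) <:+ r := by
    intro r
    induction r with
    | nil => intro h; exact absurd List.nodup_nil h
    | cons a r' ih =>
        intro h
        rw [List.nodup_cons] at h
        push_neg at h
        by_cases ha : a ∈ r'
        · exact ⟨a, r', ha, List.suffix_refl _⟩
        · obtain ⟨i, s, hm, hsuf⟩ := ih (h ha)
          exact ⟨i, s, hm, hsuf.trans (List.suffix_cons a r')⟩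
  intro r hnd
  obtain ⟨i, s, hm, hsuf⟩ := hsuffix_dup r hnd
  have hs : s ≠ [] := by rintro rfl; simp at hm
  obtain ⟨t, ht⟩ := hmem_suffix i s hm
  -- ISetR (i :: s) = ∅
  have h1 : ISetR 𝓘 (i :: s) = ∅ := by
    rw [ISetR_cons i hs]
    have h2 : JSetR 𝓘 s ⊆ JSetR 𝓘 [i] :=
      (JSetR_mono hreg s (i :: t) ht (by simp)).trans (JSetR_head hreg i t)
    apply eq_empty_of_subset_empty
    rintro x ⟨hxI, hxJ⟩
    exact (h2 hxJ).2 hxI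
  have h1J : JSetR 𝓘 (i :: s) = ∅ := by
    rw [JSetR, h1]; simp
  obtain ⟨p, hp⟩ := hsuf
  cases p with
  | nil => rw [← hp]; simpa using h1
  | cons a p' =>
      rw [← hp]
      have hne : p' ++ i :: s ≠ [] := by simp
      have hsub : ISetR 𝓘 (a :: (p' ++ i :: s)) ⊆ JSetR 𝓘 (i :: s) :=
        (ISetR_cons_subset_JSetR a hne).trans
          (JSetR_mono hreg _ _ (List.suffix_append p' (i :: s)) (by simp))
      rw [h1J] at hsub
      exact eq_empty_of_subset_empty (by simpa using hsub)

end Aux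

/-- Lemma 3.1: `I(i_0,…,i_k) ⊆ J(i_0,…,i_l) ⊆ J(i_l)` for `0 ≤ l < k`, and
`I(i_0,…,i_k) = ∅` when the indices are not all distinct. -/
theorem lemma_3_1 {K : Type*} [TopologicalSpace K] (𝓘 : ℕ → Set (Set K))
    (hreg : ∀ i : ℕ, IsRegularIsolatedFamily (𝓘 i))
    (hcover : ⋃₀ (⋃ i : ℕ, 𝓘 i) = Set.univ)
    (l : List ℕ) (hl : l ≠ []) :
    (∀ (m : ℕ) (hm : m + 1 < l.length),
      ISet 𝓘 l ⊆ JSet 𝓘 (l.take (m + 1)) ∧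
      JSet 𝓘 (l.take (m + 1)) ⊆ JSet 𝓘 [l.get ⟨m, Nat.lt_of_succ_lt hm⟩]) ∧
    (¬ l.Nodup → ISet 𝓘 l = ∅) := by
  have hIdef : ∀ t : List ℕ, ISet 𝓘 t = ISetR 𝓘 t.reverse := fun t => rfl
  have hJdef : ∀ t : List ℕ, JSet 𝓘 t = JSetR 𝓘 t.reverse := fun t => rfl
  constructor
  · intro m hm
    obtain ⟨i, r', hrev⟩ := List.exists_cons_of_ne_nil
      (show l.reverse ≠ [] by simpa using hl)
    have hlenrev : l.reverse.length = l.length := List.length_reverse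
    have hr' : r' ≠ [] := by
      rintro rfl
      rw [hrev] at hlenrev
      simp at hlenrev
      omega
    have htlen : (l.take (m + 1)).reverse.length = m + 1 := by
      simp only [List.length_reverse, List.length_take]
      omega
    have htne : (l.take (m + 1)).reverse ≠ [] := by
      intro h
      rw [h] at htlen
      simp at htlen
    have htake_suffix : (l.take (m + 1)).reverse <:+ l.reverse :=
      List.reverse_suffix.mpr (List.take_prefix _ _)
    have hsuf' : (l.take (m + 1)).reverse <:+ r' := by
      rw [hrev] at htake_suffix
      rcases List.suffix_cons_iff.mp htake_suffix with h | h
      · exfalso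
        have := congrArg List.length h
        rw [htlen] at this
        simp only [List.length_cons] at this
        rw [hrev] at hlenrev
        simp only [List.length_cons] at hlenrev
        omega
      · exact h
    constructor
    · rw [hIdef, hJdef, hrev]
      exact (ISetR_cons_subset_JSetR i hr').trans
        (JSetR_mono hreg r' _ hsuf' htne)
    · have hmlt : m < l.length := Nat.lt_of_succ_lt hm
      have hgetm : l[m]? = some (l.get ⟨m, hmlt⟩) := by
        rw [List.getElem?_eq_getElem hmlt]
        rfl
      have htrev : (l.take (m + 1)).reverse
          = l.get ⟨m, hmlt⟩ :: (l.take m).reverse := by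
        rw [List.take_succ, hgetm]
        simp [List.reverse_append]
      rw [hJdef, hJdef, htrev]
      exact JSetR_head hreg _ _
  · intro hnd
    rw [hIdef]
    exact ISetR_dup_empty hreg l.reverse (fun hn => hnd (List.nodup_reverse.mp hn))
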